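/- Fix integers n ≥ 1 and ℓ > n and a partition λ of n, and let y ∈ ℤ^n list in strictly decreasing order the numbers (i−1)·ℓ + (j−1), one for each box of λ in row i and column j. Then every strictly decreasing tuple ỹ ∈ ℤ^n of nonnegative integers such that, for each residue class r mod ℓ, ỹ and y have the same number of coordinates congruent to r, satisfies ỹ_a ≥ y_a for all a. In particular Σ_a ỹ_a ≥ Σ_a y_a, with equality if and only if ỹ = y. -/

import Mathlib

open Finset

/-- If every element of a residue class `r` of `z` below `v` exists, its quotient by `ℓ`
lies in `[0, m)` provided `v ≤ m*ℓ + r`; hence there are at most `m` such elements. -/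
private lemma sfm_quotient_count_bound
    {ℓ : ℤ} (hℓ0 : 0 < ℓ) {n : ℕ} (z : Fin n → ℤ) (hzinj : Function.Injective z)
    (hznn : ∀ a, 0 ≤ z a) (r v : ℤ) (m : ℕ) (hm : v ≤ (m : ℤ) * ℓ + r) :
    (Finset.univ.filter (fun a : Fin n => z a < v ∧ z a % ℓ = r)).card ≤ m := by
  classical
  have hdec : ∀ a : Fin n, z a % ℓ = r → ℓ * (z a / ℓ) + r = z a := by
    intro a har
    conv_rhs => rw [← Int.mul_ediv_add_emod (z a) ℓ]
    rw [har]
  have h := Finset.card_le_card_of_injOn (fun a => z a / ℓ)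
    (s := Finset.univ.filter (fun a : Fin n => z a < v ∧ z a % ℓ = r))
    (t := Finset.Ico (0:ℤ) (m:ℤ)) ?_ ?_
  · simpa [Int.card_Ico] using h
  · intro a ha
    simp only [coe_filter, Set.mem_setOf_eq, mem_filter, mem_univ, true_and] at ha
    obtain ⟨hav, har⟩ := ha
    have hd := hdec a har
    have h0 : 0 ≤ z a / ℓ := Int.ediv_nonneg (hznn a) hℓ0.le
    refine Finset.mem_Ico.mpr ⟨h0, ?_⟩
    by_contra hq
    push_neg at hq
    have h2 : ℓ * (m : ℤ) ≤ ℓ * (z a / ℓ) := mul_le_mul_of_nonneg_left hq hℓ0.le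
    linarith
  · intro a ha b hb hab
    simp only [coe_filter, Set.mem_setOf_eq, mem_univ, true_and] at ha hb
    apply hzinj
    rw [← hdec a ha.2, ← hdec b hb.2]
    simp only at hab
    rw [hab]

/-!
STATEMENT 10. Fix integers `n ≥ 1` and `ℓ > n` and a partition `λ` of `n`, and let
`y ∈ ℤ^n` list in strictly decreasing order the numbers `(i−1)·ℓ + (j−1)`, one for
each box of `λ` in row `i` and column `j`.  Then every strictly decreasing tuple
`ỹ ∈ ℤ^n` of nonnegative integers such that, for each residue class `r mod ℓ`, `ỹ`
and `y` have the same number of coordinates congruent to `r`, satisfies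
`ỹ_a ≥ y_a` for all `a`.  In particular `Σ_a ỹ_a ≥ Σ_a y_a`, with equality if and
only if `ỹ = y`.
(Boxes are 0-indexed: the box in row `i`, column `j` of the Young diagram `μ`
contributes the value `i·ℓ + j`.)
-/

theorem standard_facet_minimal
    (n : ℕ) (hn : 1 ≤ n) (ℓ : ℤ) (hℓ : (n : ℤ) < ℓ)
    (μ : YoungDiagram) (hcard : μ.card = n)
    (y : Fin n → ℤ) (hymono : StrictAnti y)
    (hy : Multiset.map y Finset.univ.val =
        Multiset.map (fun c : ℕ × ℕ => (c.1 : ℤ) * ℓ + (c.2 : ℤ)) μ.cells.val)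
    (z : Fin n → ℤ) (hzmono : StrictAnti z) (hznn : ∀ a, 0 ≤ z a)
    (hres : ∀ r : ℤ,
        (Finset.univ.filter (fun a : Fin n => z a % ℓ = r)).card =
        (Finset.univ.filter (fun a : Fin n => y a % ℓ = r)).card) :
    (∀ a, y a ≤ z a) ∧
    (∑ a, y a ≤ ∑ a, z a) ∧
    ((∑ a, z a = ∑ a, y a) ↔ z = y) := by
  classical
  have hℓ0 : (0:ℤ) < ℓ := lt_of_le_of_lt (Int.ofNat_nonneg n) hℓ
  set f : ℕ × ℕ → ℤ := fun c => (c.1 : ℤ) * ℓ + (c.2 : ℤ) with hf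
  -- column indices of cells are < ℓ
  have hcell : ∀ c ∈ μ.cells, ((c.2 : ℤ) < ℓ) := by
    intro c hc
    have hc' : c ∈ μ := (YoungDiagram.mem_cells _).mp hc
    have h1 : c.2 < μ.rowLen c.1 := by
      have : (c.1, c.2) ∈ μ := by simpa using hc'
      exact YoungDiagram.mem_iff_lt_rowLen.mp this
    have h2 : μ.rowLen c.1 ≤ n := by
      rw [YoungDiagram.rowLen_eq_card, ← hcard]
      exact Finset.card_le_card (Finset.filter_subset _ _)
    have : c.2 < n := lt_of_lt_of_le h1 h2
    exact lt_trans (by exact_mod_cast this) hℓ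
  -- residue/quotient of cell values
  have hmodcell : ∀ c ∈ μ.cells, f c % ℓ = (c.2 : ℤ) := by
    intro c hc
    have h1 : f c % ℓ = (c.2 : ℤ) % ℓ := by
      show ((c.1 : ℤ) * ℓ + (c.2 : ℤ)) % ℓ = (c.2 : ℤ) % ℓ
      rw [add_comm]
      exact Int.add_mul_emod_self_right _ _ _
    rw [h1, Int.emod_eq_of_lt (Int.ofNat_nonneg _) (hcell c hc)]
  -- bridge: counts over y equal counts over cells
  have hybridge : ∀ (p : ℤ → Prop) [DecidablePred p],
      (Finset.univ.filter (fun a : Fin n => p (y a))).card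
        = (μ.cells.filter (fun c => p (f c))).card := by
    intro p hp
    have h1 : (Finset.univ.filter (fun a : Fin n => p (y a))).card
        = Multiset.countP p (Multiset.map y Finset.univ.val) := by
      rw [Multiset.countP_map]; rfl
    have h2 : (μ.cells.filter (fun c => p (f c))).card
        = Multiset.countP p (Multiset.map f μ.cells.val) := by
      rw [Multiset.countP_map]; rfl
    rw [h1, h2, hy]
  -- per-class counting over cells
  have hcells : ∀ (r : ℤ), 0 ≤ r → r < ℓ → ∀ (q : ℤ → Prop) [DecidablePred q],
      (μ.cells.filter (fun c => q (f c) ∧ f c % ℓ = r)).card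
        = ((Finset.range (μ.colLen r.toNat)).filter
            (fun i : ℕ => (q ((i:ℤ) * ℓ + r) : Prop))).card := by
    intro r hr0 hrℓ q _
    have hrr : ((r.toNat : ℕ) : ℤ) = r := Int.toNat_of_nonneg hr0
    refine Finset.card_bij' (fun c _ => c.1) (fun i _ => (i, r.toNat)) ?_ ?_ ?_ ?_
    · intro c hc
      simp only [mem_filter] at hc
      obtain ⟨hcm, hq, hrm⟩ := hc
      have hsnd : (c.2 : ℤ) = r := by rw [← hmodcell c hcm]; exact hrm
      have hsnd' : c.2 = r.toNat := by omega
      simp only [mem_filter, Finset.mem_range]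
      constructor
      · rw [← YoungDiagram.mem_iff_lt_colLen, ← hsnd']
        simpa using (YoungDiagram.mem_cells _).mp hcm
      · have : f c = (c.1 : ℤ) * ℓ + r := by rw [hf]; simp [hsnd]
        rw [← this]; exact hq
    · intro i hi
      simp only [mem_filter, Finset.mem_range] at hi
      obtain ⟨hic, hq⟩ := hi
      have hmem : (i, r.toNat) ∈ μ := YoungDiagram.mem_iff_lt_colLen.mpr hic
      have hmemc : (i, r.toNat) ∈ μ.cells := (YoungDiagram.mem_cells _).mpr hmem
      have hfv : f (i, r.toNat) = (i : ℤ) * ℓ + r := by rw [hf]; simp [hrr]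
      simp only [mem_filter]
      refine ⟨hmemc, ?_, ?_⟩
      · rw [hfv]; exact hq
      · rw [hmodcell _ hmemc]; simpa using hrr
    · intro c hc
      simp only [mem_filter] at hc
      obtain ⟨hcm, _, hrm⟩ := hc
      have hsnd : (c.2 : ℤ) = r := by rw [← hmodcell c hcm]; exact hrm
      have hsnd' : c.2 = r.toNat := by omega
      exact Prod.ext rfl hsnd'.symm
    · intro i hi
      rfl
  -- class cardinalities
  have hclass : ∀ (r : ℤ), 0 ≤ r → r < ℓ →
      (Finset.univ.filter (fun a : Fin n => y a % ℓ = r)).card = μ.colLen r.toNat := by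
    intro r hr0 hrℓ
    have h1 := hybridge (fun x => x % ℓ = r)
    have h2 := hcells r hr0 hrℓ (fun _ => True)
    simp only [true_and] at h2
    rw [h1, h2, Finset.filter_true_of_mem (fun _ _ => trivial), Finset.card_range]
  -- the key per-class inequality
  have key : ∀ (v : ℤ) (r : ℤ), r ∈ Finset.Ico (0:ℤ) ℓ →
      (Finset.univ.filter (fun a : Fin n => z a < v ∧ z a % ℓ = r)).card
        ≤ (Finset.univ.filter (fun a : Fin n => y a < v ∧ y a % ℓ = r)).card := by
    intro v r hr
    obtain ⟨hr0, hrℓ⟩ := Finset.mem_Ico.mp hr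
    set c := μ.colLen r.toNat with hc
    have hyc : (Finset.univ.filter (fun a : Fin n => y a < v ∧ y a % ℓ = r)).card
        = ((Finset.range c).filter (fun i : ℕ => ((i:ℤ) * ℓ + r < v : Prop))).card := by
      rw [hybridge (fun x => x < v ∧ x % ℓ = r)]
      exact hcells r hr0 hrℓ (fun x => x < v)
    rw [hyc]
    by_cases hall : ∀ i : ℕ, i < c → (i:ℤ) * ℓ + r < v
    · have hT : ((Finset.range c).filter (fun i : ℕ => ((i:ℤ) * ℓ + r < v : Prop))) = Finset.range c := by
        apply Finset.filter_true_of_mem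
        intro i hi
        exact hall i (Finset.mem_range.mp hi)
      rw [hT, Finset.card_range]
      calc (Finset.univ.filter (fun a : Fin n => z a < v ∧ z a % ℓ = r)).card
          ≤ (Finset.univ.filter (fun a : Fin n => z a % ℓ = r)).card := by
            apply Finset.card_le_card
            intro a ha
            simp only [mem_filter] at ha ⊢
            exact ⟨ha.1, ha.2.2⟩
        _ = c := by rw [hres r, hclass r hr0 hrℓ]
    · push_neg at hall
      have hex : ∃ m : ℕ, m < c ∧ v ≤ (m:ℤ) * ℓ + r := hall
      set m := Nat.find hex with hm
      obtain ⟨hmc, hmv⟩ := Nat.find_spec hex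
      have hmin : ∀ i : ℕ, i < m → (i:ℤ) * ℓ + r < v := by
        intro i hi
        have := Nat.find_min hex hi
        push_neg at this
        exact this (lt_trans hi hmc)
      have hT : ((Finset.range c).filter (fun i : ℕ => ((i:ℤ) * ℓ + r < v : Prop))) = Finset.range m := by
        ext i
        simp only [mem_filter, Finset.mem_range]
        constructor
        · rintro ⟨hic, hiv⟩
          by_contra hge
          push_neg at hge
          have : (m:ℤ) * ℓ ≤ (i:ℤ) * ℓ := by
            apply mul_le_mul_of_nonneg_right _ hℓ0.le
            exact_mod_cast hge
          linarith
        · intro him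
          exact ⟨lt_trans him hmc, hmin i him⟩
      rw [hT, Finset.card_range]
      exact sfm_quotient_count_bound hℓ0 z hzmono.injective hznn r v m hmv
  -- counting below any threshold
  have hlt : ∀ v : ℤ, (Finset.univ.filter (fun a : Fin n => z a < v)).card
      ≤ (Finset.univ.filter (fun a : Fin n => y a < v)).card := by
    intro v
    have hmapz : ∀ a ∈ Finset.univ.filter (fun a : Fin n => z a < v),
        z a % ℓ ∈ Finset.Ico (0:ℤ) ℓ := by
      intro a _
      exact Finset.mem_Ico.mpr ⟨Int.emod_nonneg _ hℓ0.ne', Int.emod_lt_of_pos _ hℓ0⟩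
    have hmapy : ∀ a ∈ Finset.univ.filter (fun a : Fin n => y a < v),
        y a % ℓ ∈ Finset.Ico (0:ℤ) ℓ := by
      intro a _
      exact Finset.mem_Ico.mpr ⟨Int.emod_nonneg _ hℓ0.ne', Int.emod_lt_of_pos _ hℓ0⟩
    rw [Finset.card_eq_sum_card_fiberwise hmapz, Finset.card_eq_sum_card_fiberwise hmapy]
    apply Finset.sum_le_sum
    intro r hr
    have hz' : (Finset.univ.filter (fun a : Fin n => z a < v)).filter
        (fun a => z a % ℓ = r) = Finset.univ.filter (fun a : Fin n => z a < v ∧ z a % ℓ = r) := by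
      rw [Finset.filter_filter]
    have hy' : (Finset.univ.filter (fun a : Fin n => y a < v)).filter
        (fun a => y a % ℓ = r) = Finset.univ.filter (fun a : Fin n => y a < v ∧ y a % ℓ = r) := by
      rw [Finset.filter_filter]
    rw [hz', hy']
    exact key v r hr
  -- pointwise inequality
  have hpt : ∀ a, y a ≤ z a := by
    intro a
    by_contra hcon
    push_neg at hcon
    set v := y a with hv
    have e1 := Finset.card_filter_add_card_filter_not
      (s := (Finset.univ : Finset (Fin n))) (p := fun b : Fin n => y b < v)
    have e3 := Finset.card_filter_add_card_filter_not
      (s := (Finset.univ : Finset (Fin n))) (p := fun b : Fin n => z b < v)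
    have e2 : (a : ℕ) + 1 ≤ (Finset.univ.filter (fun b : Fin n => ¬ y b < v)).card := by
      have hsub : Finset.Iic a ⊆ Finset.univ.filter (fun b : Fin n => ¬ y b < v) := by
        intro b hb
        simp only [Finset.mem_Iic] at hb
        simp only [mem_filter, mem_univ, true_and, not_lt]
        exact hymono.antitone hb
      calc (a : ℕ) + 1 = (Finset.Iic a).card := (Fin.card_Iic a).symm
        _ ≤ _ := Finset.card_le_card hsub
    have e4 : (Finset.univ.filter (fun b : Fin n => ¬ z b < v)).card ≤ (a : ℕ) := by
      have hsub : Finset.univ.filter (fun b : Fin n => ¬ z b < v) ⊆ Finset.Iio a := by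
        intro b hb
        simp only [mem_filter, mem_univ, true_and, not_lt] at hb
        simp only [Finset.mem_Iio]
        by_contra hba
        push_neg at hba
        have : z b ≤ z a := hzmono.antitone hba
        linarith
      calc (Finset.univ.filter (fun b : Fin n => ¬ z b < v)).card
          ≤ (Finset.Iio a).card := Finset.card_le_card hsub
        _ = (a : ℕ) := Fin.card_Iio a
    have e5 := hlt v
    have ecard : (Finset.univ : Finset (Fin n)).card = n := by simp
    omega
  refine ⟨hpt, Finset.sum_le_sum (fun a _ => hpt a), ?_, ?_⟩
  · intro hsum
    funext a
    exact ((Finset.sum_eq_sum_iff_of_le (fun b _ => hpt b)).mp hsum.symm a (Finset.mem_univ a)).symm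
  · rintro rfl
    rfl
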